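/- Let d ≥ 1 and g > d. Define K̂_t(z) := ∫_0^t κ(e^u|z|) du for z ∈ ℝ^d and t ≥ 0, and Λ(y) := ∫_0^∞ (1 − κ(e^{−s}|y|)) ds, which is finite for every y ∈ ℝ^d. Then ∫_{ℝ^d} e^{−g Λ(y)} dy < ∞ and lim_{t→∞} e^{(d−g)t} ∫_{|z|≤1} ( e^{g K̂_t(z)} − 1 ) dz = ∫_{ℝ^d} e^{−g Λ(y)} dy. -/

import Mathlib

open MeasureTheory Filter

noncomputable section

abbrev Ed (d : ℕ) := EuclideanSpace ℝ (Fin d)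

/-- Positive definite kernel on an open set `U ⊆ ℝ^d`. -/
def PosDefKernel (d : ℕ) (U : Set (Ed d)) (G : Ed d → Ed d → ℝ) : Prop :=
  ∀ ρ : Ed d → ℝ, Continuous ρ → HasCompactSupport ρ → tsupport ρ ⊆ U →
    0 ≤ ∫ x in U, ∫ y in U, G x y * ρ x * ρ y

/-- `K̂_t(z) = ∫_0^t κ(e^u |z|) du`. -/
def Khatt (d : ℕ) (κ : ℝ → ℝ) (t : ℝ) (z : Ed d) : ℝ :=
  ∫ u in (0:ℝ)..t, κ (Real.exp u * ‖z‖)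

/-- `Λ(y) = ∫_0^∞ (1 − κ(e^{−s} |y|)) ds`. -/
def Lam (d : ℕ) (κ : ℝ → ℝ) (y : Ed d) : ℝ :=
  ∫ s in Set.Ioi (0:ℝ), (1 - κ (Real.exp (-s) * ‖y‖))

/-- Truncated version of `Lam`. -/
def LamT (d : ℕ) (κ : ℝ → ℝ) (t : ℝ) (y : Ed d) : ℝ :=
  ∫ s in (0:ℝ)..t, (1 - κ (Real.exp (-s) * ‖y‖))

section Aux

variable {d : ℕ} {κ : ℝ → ℝ} {c : NNReal}

lemma kcont (hκlip : LipschitzOnWith c κ (Set.Ici 0)) {y : ℝ} (hy : 0 ≤ y) :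
    Continuous (fun s : ℝ => κ (Real.exp (-s) * y)) :=
  (hκlip.continuousOn).comp_continuous (by fun_prop)
    (fun s => Set.mem_Ici.mpr (by positivity))

lemma kbound (hκlip : LipschitzOnWith c κ (Set.Ici 0)) (hκ0 : κ 0 = 1)
    {r : ℝ} (hr : 0 ≤ r) : |1 - κ r| ≤ c * r := by
  have h := hκlip.dist_le_mul r hr 0 Set.self_mem_Ici
  rw [hκ0, Real.dist_eq, Real.dist_eq, sub_zero, abs_of_nonneg hr] at h
  calc |1 - κ r| = |κ r - 1| := abs_sub_comm _ _
    _ ≤ c * r := h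

lemma integrableOn_tail (hκlip : LipschitzOnWith c κ (Set.Ici 0)) (hκ0 : κ 0 = 1)
    {a : ℝ} (ha : 0 ≤ a) (t : ℝ) :
    IntegrableOn (fun s : ℝ => 1 - κ (Real.exp (-s) * a)) (Set.Ioi t) := by
  apply Integrable.mono' (g := fun s => (c * a) * Real.exp (-s))
  · exact (((exp_neg_integrableOn_Ioi t one_pos).congr_fun (fun s _ => by
      rw [neg_one_mul]) measurableSet_Ioi).const_mul _)
  · exact ((continuous_const.sub (kcont hκlip ha)).aestronglyMeasurable).restrict
  · filter_upwards with s
    have h := kbound hκlip hκ0 (r := Real.exp (-s) * a) (by positivity)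
    rw [Real.norm_eq_abs]
    calc |1 - κ (Real.exp (-s) * a)| ≤ c * (Real.exp (-s) * a) := h
      _ = c * a * Real.exp (-s) := by ring

lemma tail_bound (hκlip : LipschitzOnWith c κ (Set.Ici 0)) (hκ0 : κ 0 = 1)
    {a : ℝ} (ha : 0 ≤ a) (t : ℝ) :
    |∫ s in Set.Ioi t, (1 - κ (Real.exp (-s) * a))| ≤ c * a * Real.exp (-t) := by
  have hInt : IntegrableOn (fun s : ℝ => (c:ℝ) * a * Real.exp (-s)) (Set.Ioi t) :=
    (((exp_neg_integrableOn_Ioi t one_pos).congr_fun (fun s _ => by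
      rw [neg_one_mul]) measurableSet_Ioi).const_mul _)
  have h := norm_integral_le_of_norm_le (μ := volume.restrict (Set.Ioi t))
    (f := fun s => 1 - κ (Real.exp (-s) * a)) hInt ?_
  · rw [Real.norm_eq_abs] at h
    refine h.trans ?_
    rw [integral_const_mul, integral_exp_neg_Ioi]
  · filter_upwards with s
    have h := kbound hκlip hκ0 (r := Real.exp (-s) * a) (by positivity)
    rw [Real.norm_eq_abs]
    calc |1 - κ (Real.exp (-s) * a)| ≤ c * (Real.exp (-s) * a) := h
      _ = c * a * Real.exp (-s) := by ring

lemma intExp (a t : ℝ) : IntegrableOn (fun s : ℝ => a * Real.exp (-s)) (Set.Ioi t) :=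
  (((exp_neg_integrableOn_Ioi t one_pos).congr_fun (fun s _ => by
      rw [neg_one_mul]) measurableSet_Ioi).const_mul _)

/-- Lipschitz-type bound for set integrals of the integrand, over sets inside `Ioi 0`. -/
lemma diff_bound (hκlip : LipschitzOnWith c κ (Set.Ici 0)) (hκ0 : κ 0 = 1)
    {S : Set ℝ} (hS : MeasurableSet S) (hsub : S ⊆ Set.Ioi 0) (y y' : Ed d) :
    |(∫ s in S, (1 - κ (Real.exp (-s) * ‖y‖))) -
      ∫ s in S, (1 - κ (Real.exp (-s) * ‖y'‖))| ≤ c * dist y y' := by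
  have h1 : IntegrableOn (fun s : ℝ => 1 - κ (Real.exp (-s) * ‖y‖)) S :=
    (integrableOn_tail hκlip hκ0 (norm_nonneg y) 0).mono_set hsub
  have h2 : IntegrableOn (fun s : ℝ => 1 - κ (Real.exp (-s) * ‖y'‖)) S :=
    (integrableOn_tail hκlip hκ0 (norm_nonneg y') 0).mono_set hsub
  rw [← integral_sub h1 h2]
  have hIb : IntegrableOn (fun s : ℝ => (c * dist y y') * Real.exp (-s)) S :=
    (intExp _ 0).mono_set hsub
  have h := norm_integral_le_of_norm_le (μ := volume.restrict S)
    (f := fun s => (1 - κ (Real.exp (-s) * ‖y‖)) - (1 - κ (Real.exp (-s) * ‖y'‖))) hIb ?_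
  · rw [Real.norm_eq_abs] at h
    refine h.trans ?_
    have hmono : (∫ s in S, (c * dist y y') * Real.exp (-s)) ≤
        ∫ s in Set.Ioi (0:ℝ), (c * dist y y') * Real.exp (-s) := by
      apply setIntegral_mono_set
      · exact intExp _ 0
      · filter_upwards with s; positivity
      · exact HasSubset.Subset.eventuallyLE hsub
    refine hmono.trans ?_
    rw [integral_const_mul, integral_exp_neg_Ioi, neg_zero, Real.exp_zero, mul_one]
  · filter_upwards with s
    rw [Real.norm_eq_abs]
    have h := hκlip.dist_le_mul (Real.exp (-s) * ‖y'‖) (Set.mem_Ici.mpr (by positivity))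
      (Real.exp (-s) * ‖y‖) (Set.mem_Ici.mpr (by positivity))
    rw [Real.dist_eq, Real.dist_eq] at h
    have habs : |Real.exp (-s) * ‖y'‖ - Real.exp (-s) * ‖y‖| ≤ Real.exp (-s) * dist y y' := by
      rw [← mul_sub, abs_mul, abs_of_nonneg (Real.exp_pos _).le]
      have := abs_norm_sub_norm_le y' y
      rw [← dist_eq_norm, dist_comm] at this
      exact mul_le_mul_of_nonneg_left this (Real.exp_pos _).le
    calc |(1 - κ (Real.exp (-s) * ‖y‖)) - (1 - κ (Real.exp (-s) * ‖y'‖))|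
        = |κ (Real.exp (-s) * ‖y'‖) - κ (Real.exp (-s) * ‖y‖)| := by ring_nf
      _ ≤ c * |Real.exp (-s) * ‖y'‖ - Real.exp (-s) * ‖y‖| := h
      _ ≤ c * (Real.exp (-s) * dist y y') :=
          mul_le_mul_of_nonneg_left habs c.coe_nonneg
      _ ≤ c * dist y y' * Real.exp (-s) := by ring_nf; rfl

lemma lam_lipschitz (hκlip : LipschitzOnWith c κ (Set.Ici 0)) (hκ0 : κ 0 = 1) :
    LipschitzWith c (Lam d κ) := by
  refine LipschitzWith.of_dist_le_mul (fun y y' => ?_)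
  rw [Real.dist_eq]
  exact diff_bound hκlip hκ0 measurableSet_Ioi (subset_refl _) y y'

lemma lamT_lipschitz (hκlip : LipschitzOnWith c κ (Set.Ici 0)) (hκ0 : κ 0 = 1)
    {t : ℝ} (ht : 0 ≤ t) : LipschitzWith c (LamT d κ t) := by
  refine LipschitzWith.of_dist_le_mul (fun y y' => ?_)
  rw [Real.dist_eq, LamT, LamT, intervalIntegral.integral_of_le ht,
    intervalIntegral.integral_of_le ht]
  exact diff_bound hκlip hκ0 measurableSet_Ioc Set.Ioc_subset_Ioi_self y y'

lemma lam_split (hκlip : LipschitzOnWith c κ (Set.Ici 0)) (hκ0 : κ 0 = 1)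
    (y : Ed d) {t : ℝ} (ht : 0 ≤ t) :
    Lam d κ y = LamT d κ t y + ∫ s in Set.Ioi t, (1 - κ (Real.exp (-s) * ‖y‖)) := by
  rw [Lam, LamT, intervalIntegral.integral_of_le ht, ← Set.Ioc_union_Ioi_eq_Ioi ht,
    setIntegral_union (Set.Ioc_disjoint_Ioi le_rfl) measurableSet_Ioi
      ((integrableOn_tail hκlip hκ0 (norm_nonneg y) 0).mono_set Set.Ioc_subset_Ioi_self)
      (integrableOn_tail hκlip hκ0 (norm_nonneg y) t)]

lemma lam_lower (hκlip : LipschitzOnWith c κ (Set.Ici 0)) (hκ0 : κ 0 = 1)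
    (hκ1 : ∀ r : ℝ, 1 ≤ r → κ r = 0) (y : Ed d) :
    max (Real.log ‖y‖) 0 - c ≤ Lam d κ y := by
  rcases le_or_gt 1 ‖y‖ with h1 | h1
  · have hy0 : (0:ℝ) < ‖y‖ := lt_of_lt_of_le one_pos h1
    set L := Real.log ‖y‖ with hL
    have hL0 : 0 ≤ L := Real.log_nonneg h1
    have hsplit := lam_split hκlip hκ0 y hL0
    have hfirst : LamT d κ L y = L := by
      rw [LamT, intervalIntegral.integral_of_le hL0]
      have : ∀ s ∈ Set.Ioc (0:ℝ) L, (1 - κ (Real.exp (-s) * ‖y‖)) = 1 := by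
        intro s hs
        have h1s : (1:ℝ) ≤ Real.exp (-s) * ‖y‖ := by
          have he : Real.exp s ≤ ‖y‖ := by
            rw [← Real.exp_log hy0]
            exact Real.exp_le_exp.mpr hs.2
          rw [Real.exp_neg, inv_mul_eq_div, le_div_iff₀ (Real.exp_pos s), one_mul]
          exact he
        rw [hκ1 _ h1s, sub_zero]
      rw [setIntegral_congr_fun measurableSet_Ioc this]
      simp [Real.volume_Ioc, ENNReal.toReal_ofReal hL0, hL0]
    have htail : -(c:ℝ) ≤ ∫ s in Set.Ioi L, (1 - κ (Real.exp (-s) * ‖y‖)) := by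
      have hb := tail_bound hκlip hκ0 (norm_nonneg y) L
      have : (c:ℝ) * ‖y‖ * Real.exp (-L) = c := by
        rw [Real.exp_neg, Real.exp_log hy0]
        field_simp
      rw [this] at hb
      linarith [(abs_le.mp hb).1]
    have hmax : max L 0 = L := max_eq_left hL0
    rw [hmax, hsplit, hfirst]
    linarith
  · have hb := tail_bound hκlip hκ0 (norm_nonneg y) 0
    rw [neg_zero, Real.exp_zero, mul_one] at hb
    have h2 : -(c:ℝ) ≤ Lam d κ y := by
      have : (c:ℝ) * ‖y‖ ≤ c := by
        calc (c:ℝ) * ‖y‖ ≤ c * 1 := mul_le_mul_of_nonneg_left h1.le c.coe_nonneg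
          _ = c := mul_one _
      have := (abs_le.mp (hb.trans this)).1
      exact this
    have hmax : max (Real.log ‖y‖) 0 = 0 :=
      max_eq_right (Real.log_nonpos (norm_nonneg y) h1.le)
    rw [hmax]
    linarith

lemma exp_lam_bound (hκlip : LipschitzOnWith c κ (Set.Ici 0)) (hκ0 : κ 0 = 1)
    (hκ1 : ∀ r : ℝ, 1 ≤ r → κ r = 0) {g : ℝ} (hg : 0 ≤ g) (y : Ed d) :
    Real.exp (-g * Lam d κ y) ≤
      (Real.exp (g * c) * 2 ^ g) * (1 + ‖y‖) ^ (-g) := by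
  set M := max (Real.log ‖y‖) 0 with hM
  have hM0 : 0 ≤ M := le_max_right _ _
  have h1 : Real.exp (-g * Lam d κ y) ≤ Real.exp (g * c) * Real.exp (-(g * M)) := by
    rw [← Real.exp_add]
    apply Real.exp_le_exp.mpr
    have := lam_lower hκlip hκ0 hκ1 y
    nlinarith
  refine h1.trans ?_
  rw [mul_assoc]
  apply mul_le_mul_of_nonneg_left _ (Real.exp_pos _).le
  -- exp(-(g*M)) ≤ 2^g * (1+‖y‖)^(-g)
  have hbase : 1 + ‖y‖ ≤ 2 * Real.exp M := by
    rcases le_or_gt 1 ‖y‖ with h1y | h1y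
    · have hy0 : (0:ℝ) < ‖y‖ := lt_of_lt_of_le one_pos h1y
      have : Real.exp M = ‖y‖ := by
        rw [hM, max_eq_left (Real.log_nonneg h1y), Real.exp_log hy0]
      rw [this]; linarith
    · have : (1:ℝ) ≤ Real.exp M := Real.one_le_exp hM0
      linarith
  have hpowle : (1 + ‖y‖) ^ g ≤ 2 ^ g * Real.exp (g * M) := by
    have h := Real.rpow_le_rpow (by positivity) hbase hg
    rw [Real.mul_rpow (by norm_num) (Real.exp_pos _).le, ← Real.exp_mul, mul_comm M g] at h
    exact h
  have h2g : (0:ℝ) < 2 ^ g := Real.rpow_pos_of_pos (by norm_num) g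
  rw [Real.rpow_neg (by positivity), Real.exp_neg,
    show (2:ℝ)^g * ((1 + ‖y‖) ^ g)⁻¹ = ((1 + ‖y‖) ^ g / 2 ^ g)⁻¹ by
      rw [inv_div, div_eq_mul_inv]]
  apply inv_anti₀
  · positivity
  · rw [div_le_iff₀ h2g]
    linarith [hpowle]

lemma exp_lam_integrable (hκlip : LipschitzOnWith c κ (Set.Ici 0)) (hκ0 : κ 0 = 1)
    (hκ1 : ∀ r : ℝ, 1 ≤ r → κ r = 0) {g : ℝ} (hgd : (d : ℝ) < g) :
    Integrable (fun y : Ed d => Real.exp (-g * Lam d κ y)) := by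
  have hg0 : (0:ℝ) ≤ g := le_trans (Nat.cast_nonneg d) hgd.le
  apply Integrable.mono' (g := fun y : Ed d =>
    (Real.exp (g * c) * 2 ^ g) * (1 + ‖y‖) ^ (-g))
  · exact (integrable_one_add_norm (by rw [finrank_euclideanSpace_fin]; exact hgd)).const_mul _
  · exact (Real.continuous_exp.comp
      (continuous_const.mul (lam_lipschitz hκlip hκ0).continuous)).aestronglyMeasurable
  · filter_upwards with y
    rw [Real.norm_eq_abs, abs_of_pos (Real.exp_pos _)]
    exact exp_lam_bound hκlip hκ0 hκ1 hg0 y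

lemma khatt_eq (hκlip : LipschitzOnWith c κ (Set.Ici 0)) (t : ℝ) (y : Ed d) :
    Khatt d κ t (Real.exp (-t) • y) = t - LamT d κ t y := by
  have hnorm : ‖Real.exp (-t) • y‖ = Real.exp (-t) * ‖y‖ := by
    rw [norm_smul, Real.norm_eq_abs, abs_of_pos (Real.exp_pos _)]
  have h1 : (fun u : ℝ => κ (Real.exp u * ‖Real.exp (-t) • y‖))
      = fun u : ℝ => κ (Real.exp (-(t - u)) * ‖y‖) := by
    funext u
    rw [hnorm, ← mul_assoc, ← Real.exp_add]
    ring_nf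
  rw [Khatt, h1]
  have h2 : (∫ u in (0:ℝ)..t, κ (Real.exp (-(t - u)) * ‖y‖))
      = ∫ s in (0:ℝ)..t, κ (Real.exp (-s) * ‖y‖) := by
    have := intervalIntegral.integral_comp_sub_left (a := (0:ℝ)) (b := t)
      (fun s => κ (Real.exp (-s) * ‖y‖)) t
    simpa using this
  rw [h2, LamT]
  have hi1 : IntervalIntegrable (fun _ : ℝ => (1:ℝ)) volume 0 t := intervalIntegrable_const
  have hi2 : IntervalIntegrable (fun s : ℝ => 1 - κ (Real.exp (-s) * ‖y‖)) volume 0 t :=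
    (continuous_const.sub (kcont hκlip (norm_nonneg y))).intervalIntegrable _ _
  have h3 : (∫ s in (0:ℝ)..t, κ (Real.exp (-s) * ‖y‖))
      = ∫ s in (0:ℝ)..t, ((1:ℝ) - (1 - κ (Real.exp (-s) * ‖y‖))) := by
    congr 1
    funext s
    ring
  rw [h3, intervalIntegral.integral_sub hi1 hi2]
  simp

end Aux

theorem statement10
    (d : ℕ) (hd : 1 ≤ d)
    (κ : ℝ → ℝ) (hκlip : ∃ c : NNReal, LipschitzOnWith c κ (Set.Ici 0))
    (hκnn : ∀ r : ℝ, 0 ≤ r → 0 ≤ κ r) (hκ0 : κ 0 = 1)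
    (hκ1 : ∀ r : ℝ, 1 ≤ r → κ r = 0)
    (hκpd : PosDefKernel d Set.univ (fun x y => κ ‖x - y‖))
    (g : ℝ) (hg : (d : ℝ) < g) :
    -- Λ(y) is finite for every y
    (∀ y : Ed d, IntegrableOn (fun s : ℝ => 1 - κ (Real.exp (-s) * ‖y‖)) (Set.Ioi 0)) ∧
    -- ∫ e^{−g Λ(y)} dy < ∞
    Integrable (fun y : Ed d => Real.exp (-g * Lam d κ y)) ∧
    -- lim_{t→∞} e^{(d−g)t} ∫_{|z|≤1} ( e^{g K̂_t(z)} − 1 ) dz = ∫ e^{−g Λ(y)} dy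
    Tendsto (fun t : ℝ =>
        Real.exp (((d : ℝ) - g) * t) *
          ∫ z in Metric.closedBall (0 : Ed d) 1, (Real.exp (g * Khatt d κ t z) - 1))
      atTop (nhds (∫ y : Ed d, Real.exp (-g * Lam d κ y))) := by
  obtain ⟨c, hκlip⟩ := hκlip
  have hg0 : (0:ℝ) ≤ g := le_trans (Nat.cast_nonneg d) hg.le
  refine ⟨fun y => integrableOn_tail hκlip hκ0 (norm_nonneg y) 0,
    exp_lam_integrable hκlip hκ0 hκ1 hg, ?_⟩
  set V := (volume (Metric.closedBall (0 : Ed d) 1)).toReal with hV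
  -- the key algebraic identity for each t ≥ 0
  have key : ∀ t : ℝ, 0 ≤ t →
      Real.exp (((d : ℝ) - g) * t) *
        (∫ z in Metric.closedBall (0 : Ed d) 1, (Real.exp (g * Khatt d κ t z) - 1))
      = (∫ y : Ed d, Set.indicator (Metric.closedBall (0 : Ed d) (Real.exp t))
            (fun y => Real.exp (-g * LamT d κ t y)) y)
        - Real.exp (((d : ℝ) - g) * t) * V := by
    intro t ht
    set F : Ed d → ℝ := fun z => Real.exp (g * Khatt d κ t z) - 1 with hF
    have hiff : ∀ x : Ed d, (Real.exp (-t) * ‖x‖ ≤ 1 ↔ ‖x‖ ≤ Real.exp t) := by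
      intro x
      rw [Real.exp_neg, inv_mul_le_iff₀ (Real.exp_pos t), mul_one]
    have hsmul : ∀ x : Ed d,
        Set.indicator (Metric.closedBall (0 : Ed d) 1) F (Real.exp (-t) • x)
        = Set.indicator (Metric.closedBall (0 : Ed d) (Real.exp t))
            (fun y => F (Real.exp (-t) • y)) x := by
      intro x
      have hn : ‖Real.exp (-t) • x‖ = Real.exp (-t) * ‖x‖ := by
        rw [norm_smul, Real.norm_eq_abs, abs_of_pos (Real.exp_pos _)]
      have hmem : (Real.exp (-t) • x ∈ Metric.closedBall (0 : Ed d) 1)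
          ↔ (x ∈ Metric.closedBall (0 : Ed d) (Real.exp t)) := by
        simp only [Metric.mem_closedBall, dist_zero_right, hn]
        exact hiff x
      classical
      rw [Set.indicator_apply, Set.indicator_apply]
      by_cases hx : x ∈ Metric.closedBall (0 : Ed d) (Real.exp t)
      · rw [if_pos (hmem.mpr hx), if_pos hx]
      · rw [if_neg (fun h => hx (hmem.mp h)), if_neg hx]
    have hcov := Measure.integral_comp_smul (μ := volume)
      (Set.indicator (Metric.closedBall (0 : Ed d) 1) F) (Real.exp (-t))
    rw [finrank_euclideanSpace_fin] at hcov
    have habs : |((Real.exp (-t)) ^ d)⁻¹| = Real.exp ((d : ℝ) * t) := by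
      rw [← Real.exp_nat_mul, ← Real.exp_neg, abs_of_pos (Real.exp_pos _)]
      ring_nf
    rw [habs] at hcov
    have hcov2 : (∫ x : Ed d, Set.indicator (Metric.closedBall (0 : Ed d) (Real.exp t))
          (fun y => F (Real.exp (-t) • y)) x)
        = Real.exp ((d : ℝ) * t) * ∫ z in Metric.closedBall (0 : Ed d) 1, F z := by
      rw [← integral_indicator measurableSet_closedBall, ← smul_eq_mul, ← hcov]
      congr 1
      funext x
      rw [hsmul x]
    -- rewrite F (exp(-t) • y) via khatt_eq
    have hFy : ∀ y : Ed d, F (Real.exp (-t) • y)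
        = Real.exp (g * t) * Real.exp (-g * LamT d κ t y) - 1 := by
      intro y
      rw [hF]
      simp only
      rw [khatt_eq hκlip t y, ← Real.exp_add]
      ring_nf
    have hcompact : IsCompact (Metric.closedBall (0 : Ed d) (Real.exp t)) :=
      isCompact_closedBall _ _
    have hcontL : Continuous (fun y : Ed d => Real.exp (-g * LamT d κ t y)) :=
      Real.continuous_exp.comp
        (continuous_const.mul (lamT_lipschitz hκlip hκ0 ht).continuous)
    have hint1 : IntegrableOn (fun y : Ed d => Real.exp (g * t) * Real.exp (-g * LamT d κ t y))
        (Metric.closedBall (0 : Ed d) (Real.exp t)) :=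
      (continuous_const.mul hcontL).continuousOn.integrableOn_compact hcompact
    have hint2 : IntegrableOn (fun _ : Ed d => (1:ℝ))
        (Metric.closedBall (0 : Ed d) (Real.exp t)) :=
      (integrableOn_const_iff).mpr (Or.inr (measure_closedBall_lt_top))
    have hsplit : (∫ y in Metric.closedBall (0 : Ed d) (Real.exp t), F (Real.exp (-t) • y))
        = Real.exp (g * t) *
            (∫ y in Metric.closedBall (0 : Ed d) (Real.exp t),
              Real.exp (-g * LamT d κ t y))
          - (volume (Metric.closedBall (0 : Ed d) (Real.exp t))).toReal := by
      have heq : (∫ y in Metric.closedBall (0 : Ed d) (Real.exp t), F (Real.exp (-t) • y))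
          = ∫ y in Metric.closedBall (0 : Ed d) (Real.exp t),
              (Real.exp (g * t) * Real.exp (-g * LamT d κ t y) - 1) := by
        apply setIntegral_congr_fun measurableSet_closedBall
        intro y _
        exact hFy y
      rw [heq, integral_sub hint1 hint2, integral_const_mul, setIntegral_const, smul_eq_mul,
        mul_one]
      rfl
    have hvol : (volume (Metric.closedBall (0 : Ed d) (Real.exp t))).toReal
        = Real.exp ((d : ℝ) * t) * V := by
      rw [Measure.addHaar_closedBall' volume (0 : Ed d) (Real.exp_pos t).le,
        finrank_euclideanSpace_fin, ENNReal.toReal_mul,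
        ENNReal.toReal_ofReal (by positivity), ← Real.exp_nat_mul, hV]
    have hIndEq : (∫ y : Ed d, Set.indicator (Metric.closedBall (0 : Ed d) (Real.exp t))
          (fun y => Real.exp (-g * LamT d κ t y)) y)
        = ∫ y in Metric.closedBall (0 : Ed d) (Real.exp t),
            Real.exp (-g * LamT d κ t y) :=
      integral_indicator measurableSet_closedBall
    have hIndEq2 : (∫ x : Ed d, Set.indicator (Metric.closedBall (0 : Ed d) (Real.exp t))
          (fun y => F (Real.exp (-t) • y)) x)
        = ∫ y in Metric.closedBall (0 : Ed d) (Real.exp t), F (Real.exp (-t) • y) :=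
      integral_indicator measurableSet_closedBall
    rw [hIndEq2] at hcov2
    rw [hIndEq]
    have hint : (∫ z in Metric.closedBall (0 : Ed d) 1, F z)
        = Real.exp (-((d : ℝ) * t)) *
            (Real.exp (g * t) *
              (∫ y in Metric.closedBall (0 : Ed d) (Real.exp t),
                Real.exp (-g * LamT d κ t y))
            - Real.exp ((d : ℝ) * t) * V) := by
      rw [← hvol, ← hsplit, hcov2, ← mul_assoc, ← Real.exp_add]
      simp
    have hBall : (∫ z in Metric.closedBall (0 : Ed d) 1,
        (Real.exp (g * Khatt d κ t z) - 1)) = ∫ z in Metric.closedBall (0 : Ed d) 1, F z := rfl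
    rw [hBall, hint]
    have k1 : Real.exp (((d:ℝ)-g)*t) * Real.exp (-((d:ℝ)*t)) * Real.exp (g*t) = 1 := by
      rw [← Real.exp_add, ← Real.exp_add,
        show ((d:ℝ)-g)*t + -((d:ℝ)*t) + g*t = (0:ℝ) by ring, Real.exp_zero]
    have k2 : Real.exp (((d:ℝ)-g)*t) * Real.exp (-((d:ℝ)*t)) * Real.exp ((d:ℝ)*t)
        = Real.exp (((d:ℝ)-g)*t) := by
      rw [← Real.exp_add, ← Real.exp_add,
        show ((d:ℝ)-g)*t + -((d:ℝ)*t) + (d:ℝ)*t = ((d:ℝ)-g)*t by ring]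
    linear_combination (∫ y in Metric.closedBall (0:Ed d) (Real.exp t),
      Real.exp (-g * LamT d κ t y)) * k1 - V * k2
  -- limit of the second term
  have h2 : Tendsto (fun t : ℝ => Real.exp (((d : ℝ) - g) * t) * V) atTop (nhds 0) := by
    have hb : Tendsto (fun t : ℝ => ((d : ℝ) - g) * t) atTop atBot := by
      have h3 : Tendsto (fun t : ℝ => (g - (d : ℝ)) * t) atTop atTop :=
        Tendsto.const_mul_atTop (by linarith) tendsto_id
      have h4 := tendsto_neg_atTop_atBot.comp h3
      refine h4.congr (fun t => ?_)
      simp only [Function.comp]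
      ring
    have h5 := (Real.tendsto_exp_atBot.comp hb).mul_const V
    rwa [zero_mul] at h5
  -- limit of the first term by dominated convergence
  have h1 : Tendsto (fun t : ℝ =>
      ∫ y : Ed d, Set.indicator (Metric.closedBall (0 : Ed d) (Real.exp t))
        (fun y => Real.exp (-g * LamT d κ t y)) y) atTop
      (nhds (∫ y : Ed d, Real.exp (-g * Lam d κ y))) := by
    apply tendsto_integral_filter_of_dominated_convergence
      (bound := fun y : Ed d =>
        Real.exp (g * c) * ((Real.exp (g * c) * 2 ^ g) * (1 + ‖y‖) ^ (-g)))
    · filter_upwards [eventually_ge_atTop (0:ℝ)] with t ht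
      exact ((Real.continuous_exp.comp (continuous_const.mul
        (lamT_lipschitz hκlip hκ0 ht).continuous)).aestronglyMeasurable).indicator
        measurableSet_closedBall
    · filter_upwards [eventually_ge_atTop (0:ℝ)] with t ht
      filter_upwards with y
      by_cases hy : y ∈ Metric.closedBall (0 : Ed d) (Real.exp t)
      · rw [Set.indicator_of_mem hy, Real.norm_eq_abs, abs_of_pos (Real.exp_pos _)]
        have hyn : ‖y‖ ≤ Real.exp t := by
          simpa [Metric.mem_closedBall, dist_zero_right] using hy
        have hsplit := lam_split hκlip hκ0 y ht
        have htail := tail_bound hκlip hκ0 (norm_nonneg y) t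
        have htail2 : |∫ s in Set.Ioi t, (1 - κ (Real.exp (-s) * ‖y‖))| ≤ c := by
          refine htail.trans ?_
          calc (c:ℝ) * ‖y‖ * Real.exp (-t) ≤ c * Real.exp t * Real.exp (-t) := by
                apply mul_le_mul_of_nonneg_right _ (Real.exp_pos _).le
                exact mul_le_mul_of_nonneg_left hyn c.coe_nonneg
            _ = c := by rw [mul_assoc, ← Real.exp_add]; simp
        have hle : -g * LamT d κ t y ≤ g * c + -g * Lam d κ y := by
          nlinarith [(abs_le.mp htail2).1, (abs_le.mp htail2).2]
        calc Real.exp (-g * LamT d κ t y) ≤ Real.exp (g * c + -g * Lam d κ y) :=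
              Real.exp_le_exp.mpr hle
          _ = Real.exp (g * c) * Real.exp (-g * Lam d κ y) := Real.exp_add _ _
          _ ≤ Real.exp (g * c) *
                ((Real.exp (g * c) * 2 ^ g) * (1 + ‖y‖) ^ (-g)) := by
              apply mul_le_mul_of_nonneg_left _ (Real.exp_pos _).le
              exact exp_lam_bound hκlip hκ0 hκ1 hg0 y
      · rw [Set.indicator_of_notMem hy, norm_zero]
        positivity
    · exact ((integrable_one_add_norm (by
        rw [finrank_euclideanSpace_fin]; exact hg)).const_mul _).const_mul _
    · filter_upwards with y
      have hev : ∀ᶠ t : ℝ in atTop,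
          Set.indicator (Metric.closedBall (0 : Ed d) (Real.exp t))
            (fun y => Real.exp (-g * LamT d κ t y)) y
          = Real.exp (-g * LamT d κ t y) := by
        filter_upwards [eventually_ge_atTop ‖y‖] with t ht
        apply Set.indicator_of_mem
        simp only [Metric.mem_closedBall, dist_zero_right]
        calc ‖y‖ ≤ t := ht
          _ ≤ Real.exp t := by linarith [Real.add_one_le_exp t]
      have hLam : Tendsto (fun t : ℝ => LamT d κ t y) atTop (nhds (Lam d κ y)) :=
        intervalIntegral_tendsto_integral_Ioi 0
          (integrableOn_tail hκlip hκ0 (norm_nonneg y) 0) tendsto_id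
      have h6 : Tendsto (fun t : ℝ => Real.exp (-g * LamT d κ t y)) atTop
          (nhds (Real.exp (-g * Lam d κ y))) :=
        (Real.continuous_exp.tendsto _).comp (hLam.const_mul (-g))
      exact Tendsto.congr' (hev.mono fun t h => h.symm) h6
  have hfin := h1.sub h2
  rw [sub_zero] at hfin
  apply hfin.congr'
  filter_upwards [eventually_ge_atTop (0:ℝ)] with t ht
  exact (key t ht).symm
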